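/- Let N be a positive integer. The group Γ0(N) has an elliptic point — that is, there exist a matrix γ = (a b; c d) ∈ Γ0(N) with γ ≠ I and γ ≠ −I and a point z in the upper half-plane ℍ with (az+b)/(cz+d) = z — if and only if it is NOT the case that both of the following hold: (i) 4 divides N or N is divisible by some prime p ≡ 3 (mod 4), and (ii) 9 divides N or N is divisible by some prime p ≡ 2 (mod 3). -/

import Mathlib

open CongruenceSubgroup
open scoped MatrixGroups
open UpperHalfPlane

/-- Hensel step for monic quadratics. -/
theorem hensel_step (p : ℕ) (hp : p.Prime) (d e x : ℤ) (k : ℕ) (hk : 1 ≤ k)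
    (hx : (p:ℤ)^k ∣ x^2 + d*x + e) (hd : ¬ (p:ℤ) ∣ 2*x + d) :
    ∃ y : ℤ, (p:ℤ)^(k+1) ∣ y^2 + d*y + e ∧ (p:ℤ) ∣ y - x := by
  haveI : Fact p.Prime := ⟨hp⟩
  obtain ⟨m, hm⟩ := hx
  have hu : ((2*x + d : ℤ) : ZMod p) ≠ 0 := by
    rw [Ne, ZMod.intCast_zmod_eq_zero_iff_dvd]; exact_mod_cast hd
  set t : ℤ := (((-m * ((2*x + d : ℤ) : ZMod p)⁻¹ : ZMod p)).val : ℤ) with ht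
  have key : (p:ℤ) ∣ m + t*(2*x+d) + t^2 * p^k := by
    rw [← ZMod.intCast_zmod_eq_zero_iff_dvd]
    have h1 : ((t:ℤ) : ZMod p) = (-m * ((2*x + d : ℤ) : ZMod p)⁻¹ : ZMod p) := by
      rw [ht]; push_cast
      rw [ZMod.natCast_val, ZMod.cast_id]
    have hk' : (((p:ℤ):ZMod p))^k = 0 := by
      rw [show ((p:ℤ):ZMod p) = 0 by simp]
      exact zero_pow (by omega)
    push_cast
    push_cast at h1 hk'
    rw [h1, hk']
    have hu' : (2 * (x:ZMod p) + d) ≠ 0 := by push_cast at hu; exact hu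
    field_simp
    ring
  obtain ⟨s, hs⟩ := key
  refine ⟨x + t * p^k, ⟨s + 2*t^2*(x:ℤ)*0 + 0, ?_⟩, ⟨t * p^(k-1), by
    have : (p:ℤ)^k = p * p^(k-1) := by
      rw [← pow_succ']; congr 1; omega
    rw [this]; ring⟩⟩
  have expand : (x + t*p^k)^2 + d*(x + t*p^k) + e
      = (p:ℤ)^k * (m + t*(2*x+d) + t^2 * p^k) := by
    linear_combination hm
  rw [expand, hs, pow_succ]
  ring

theorem hensel_all (p : ℕ) (hp : p.Prime) (d e x : ℤ)
    (hx : (p:ℤ) ∣ x^2 + d*x + e) (hd : ¬ (p:ℤ) ∣ 2*x + d) (k : ℕ) :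
    ∃ y : ℤ, (p:ℤ)^k ∣ y^2 + d*y + e := by
  suffices h : ∀ k : ℕ, 1 ≤ k → ∃ y : ℤ, (p:ℤ)^k ∣ y^2 + d*y + e ∧ (p:ℤ) ∣ y - x by
    rcases Nat.eq_zero_or_pos k with hk | hk
    · exact ⟨x, by simp [hk]⟩
    · obtain ⟨y, hy, -⟩ := h k hk; exact ⟨y, hy⟩
  intro k hk
  induction k with
  | zero => omega
  | succ n ih =>
    rcases Nat.eq_zero_or_pos n with hn | hn
    · exact ⟨x, by simpa [hn] using hx, by simp⟩
    obtain ⟨y, hy, hyx⟩ := ih hn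
    have hd' : ¬ (p:ℤ) ∣ 2*y + d := by
      intro h
      apply hd
      have : (2*x + d) = (2*y + d) - 2*(y - x) := by ring
      rw [this]
      exact dvd_sub h (Dvd.dvd.mul_left hyx 2)
    obtain ⟨z, hz, hzy⟩ := hensel_step p hp d e y n hn hy hd'
    exact ⟨z, hz, by
      have : z - x = (z - y) + (y - x) := by ring
      rw [this]; exact dvd_add hzy hyx⟩

theorem crt_quad (m n : ℕ) (h : m.Coprime n) (d e : ℤ)
    (hm : ∃ x : ℤ, (m:ℤ) ∣ x^2 + d*x + e) (hn : ∃ x : ℤ, (n:ℤ) ∣ x^2 + d*x + e) :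
    ∃ x : ℤ, ((m*n : ℕ):ℤ) ∣ x^2 + d*x + e := by
  obtain ⟨x, hx⟩ := hm
  obtain ⟨y, hy⟩ := hn
  have hco : IsCoprime (m:ℤ) (n:ℤ) := by
    rw [Int.isCoprime_iff_gcd_eq_one]; exact_mod_cast h
  have hco' := hco
  obtain ⟨u, v, huv⟩ := hco'
  refine ⟨x * v * n + y * u * m, ?_⟩
  push_cast
  set z : ℤ := x * v * n + y * u * m with hz
  have hzx : (m:ℤ) ∣ z - x := ⟨u * (y - x), by linear_combination x * huv⟩
  have hzy : (n:ℤ) ∣ z - y := ⟨v * (x - y), by linear_combination y * huv⟩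
  have h1 : (m:ℤ) ∣ z^2 + d*z + e := by
    have : z^2 + d*z + e = (x^2 + d*x + e) + (z - x) * (z + x + d) := by ring
    rw [this]; exact dvd_add hx (hzx.mul_right _)
  have h2 : (n:ℤ) ∣ z^2 + d*z + e := by
    have : z^2 + d*z + e = (y^2 + d*y + e) + (z - y) * (z + y + d) := by ring
    rw [this]; exact dvd_add hy (hzy.mul_right _)
  exact hco.mul_dvd h1 h2

theorem solvable_of_prime_pows (N : ℕ) (hN : 0 < N) (d e : ℤ)
    (h : ∀ p k : ℕ, p.Prime → p^k ∣ N → ∃ x : ℤ, ((p^k : ℕ):ℤ) ∣ x^2 + d*x + e) :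
    ∃ x : ℤ, (N:ℤ) ∣ x^2 + d*x + e := by
  induction N using Nat.strong_induction_on with
  | _ N ih =>
    rcases eq_or_ne N 1 with h1 | h1
    · exact ⟨0, by simp [h1]⟩
    have hN0 : N ≠ 0 := by omega
    set p := N.minFac with hp
    have hpp : p.Prime := Nat.minFac_prime h1
    set k := N.factorization p with hk
    have hdvd : p^k ∣ N := Nat.ordProj_dvd N p
    have hsplit : p^k * (N / p^k) = N := Nat.ordProj_mul_ordCompl_eq_self N p
    have hcop : (p^k).Coprime (N / p^k) :=
      Nat.Coprime.pow_left _ (Nat.coprime_ordCompl hpp hN0)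
    have hpos' : 0 < N / p^k := Nat.div_pos (Nat.le_of_dvd hN hdvd) (pow_pos hpp.pos k)
    have hklt : N / p^k < N := by
      apply Nat.div_lt_self hN
      apply Nat.one_lt_pow ?_ hpp.one_lt
      rw [hk]
      exact (Nat.Prime.factorization_pos_of_dvd hpp hN0 (Nat.minFac_dvd N)).ne'
    have hrec := ih (N / p^k) hklt hpos'
      (fun q j hq hqd => h q j hq (hqd.trans (Nat.div_dvd_of_dvd hdvd)))
    have hpk := h p k hpp hdvd
    obtain ⟨x, hx⟩ := crt_quad (p^k) (N / p^k) hcop d e hpk hrec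
    rw [hsplit] at hx
    exact ⟨x, hx⟩

theorem no_root_mod3 (p : ℕ) (hp : p.Prime) (h2 : p % 3 = 2) (x : ℤ) :
    ¬ (p:ℤ) ∣ x^2 + x + 1 := by
  haveI : Fact p.Prime := ⟨hp⟩
  intro h
  set w : ZMod p := (x : ZMod p) with hw
  have hw0 : w^2 + w + 1 = 0 := by
    have := (ZMod.intCast_zmod_eq_zero_iff_dvd _ _).2 h
    push_cast at this
    exact this
  have h3ne : (3 : ZMod p) ≠ 0 := by
    intro hh
    have := (ZMod.natCast_eq_zero_iff 3 p).1 (by exact_mod_cast hh)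
    have : p = 3 := ((Nat.prime_three).eq_one_or_self_of_dvd p this).resolve_left hp.one_lt.ne'
    omega
  have hwne : w ≠ 0 := by
    intro hh; rw [hh] at hw0; simp at hw0
  have hwu : IsUnit w := isUnit_iff_ne_zero.mpr hwne
  have hw3 : w^3 = 1 := by
    have : (w - 1) * (w^2 + w + 1) = w^3 - 1 := by ring
    rw [hw0, mul_zero] at this
    linear_combination -this
  have hwne1 : w ≠ 1 := by
    intro hh; rw [hh] at hw0; norm_num at hw0
    exact h3ne (by linear_combination hw0)
  set u := hwu.unit with hu
  have hu3 : u ^ 3 = 1 := by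
    ext; push_cast; simpa [hu] using hw3
  have hou : orderOf u = 3 := by
    have hdvd := orderOf_dvd_of_pow_eq_one hu3
    rcases (Nat.prime_three).eq_one_or_self_of_dvd _ hdvd with h1 | h1
    · exfalso; apply hwne1
      have h1' := orderOf_eq_one_iff.1 h1
      have := congrArg (Units.val) h1'
      simpa [hu] using this
    · exact h1
  have hcard : orderOf u ∣ Fintype.card (ZMod p)ˣ := orderOf_dvd_card
  rw [hou, ZMod.card_units_eq_totient, Nat.totient_prime hp] at hcard
  have := hp.two_le
  omega

theorem smul_eq_iff (g : SL(2,ℤ)) (z : ℍ) :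
    g • z = z ↔ ((((g : Matrix (Fin 2) (Fin 2) ℤ) 0 0 : ℤ) : ℂ) * z + ((g : Matrix (Fin 2) (Fin 2) ℤ) 0 1 : ℤ))
      = ((((g : Matrix (Fin 2) (Fin 2) ℤ) 1 0 : ℤ) : ℂ) * z + ((g : Matrix (Fin 2) (Fin 2) ℤ) 1 1 : ℤ)) * z := by
  set a := (g : Matrix (Fin 2) (Fin 2) ℤ) 0 0
  set b := (g : Matrix (Fin 2) (Fin 2) ℤ) 0 1
  set c := (g : Matrix (Fin 2) (Fin 2) ℤ) 1 0
  set d := (g : Matrix (Fin 2) (Fin 2) ℤ) 1 1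
  have hdet : a * d - b * c = 1 := by
    have := g.property
    rw [Matrix.det_fin_two] at this
    linarith [this]
  have hden : ((c : ℂ) * z + d) ≠ 0 := by
    intro h
    have him : (c : ℝ) * z.im = 0 := by
      have := congrArg Complex.im h
      simpa using this
    have hc : (c : ℝ) = 0 := by
      rcases mul_eq_zero.1 him with h' | h'
      · exact h'
      · exact absurd h' (ne_of_gt z.im_pos)
    have hc0 : c = 0 := by exact_mod_cast hc
    have hd0 : (d : ℂ) = 0 := by simpa [hc0] using h
    have : d = 0 := by exact_mod_cast hd0
    rw [hc0, this] at hdet; simp at hdet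
  rw [specialLinearGroup_apply]
  simp only [eq_intCast, Complex.ofReal_intCast]
  rw [UpperHalfPlane.ext_iff]
  simp only [coe_mk]
  rw [div_eq_iff (by simpa using hden)]
  constructor <;> intro h
  · push_cast at h ⊢; linear_combination h
  · push_cast at h ⊢; linear_combination h

theorem exists_root_neg_one (N : ℕ) (hN : 0 < N) (h4 : ¬ 4 ∣ N)
    (hp : ∀ p : ℕ, p.Prime → p ∣ N → p % 4 ≠ 3) : ∃ x : ℤ, (N:ℤ) ∣ x^2 + 0*x + 1 := by
  apply solvable_of_prime_pows N hN 0 1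
  intro p k hpp hpk
  rcases Nat.eq_zero_or_pos k with hk | hk
  · exact ⟨0, by simp [hk]⟩
  have hpN : p ∣ N := (dvd_pow_self p hk.ne').trans hpk
  rcases hpp.eq_two_or_odd' with h2 | hodd
  · -- p = 2, k = 1
    have hk1 : k = 1 := by
      by_contra hk1
      have hk2 : 2 ≤ k := by omega
      have hd4 : (4:ℕ) ∣ p ^ k := by
        rw [h2, show (4:ℕ) = 2^2 by norm_num]
        exact pow_dvd_pow 2 hk2
      exact h4 (hd4.trans hpk)
    exact ⟨1, by rw [h2, hk1]; norm_num⟩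
  · haveI : Fact p.Prime := ⟨hpp⟩
    have hmod : p % 4 ≠ 3 := hp p hpp hpN
    obtain ⟨r, hr⟩ := ZMod.exists_sq_eq_neg_one_iff.mpr hmod
    have hodd' : p % 2 = 1 := Nat.odd_iff.mp hodd
    have hrne : r ≠ 0 := by
      intro hh; rw [hh] at hr; simp at hr
    set x₀ : ℤ := (r.val : ℤ) with hx₀
    have hcast : ((x₀ : ℤ) : ZMod p) = r := by
      rw [hx₀]; push_cast; rw [ZMod.natCast_val, ZMod.cast_id]
    have hx : (p:ℤ) ∣ x₀^2 + 0*x₀ + 1 := by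
      rw [← ZMod.intCast_zmod_eq_zero_iff_dvd]
      push_cast
      rw [hcast]
      linear_combination -hr
    have hd : ¬ (p:ℤ) ∣ 2*x₀ + 0 := by
      rw [← ZMod.intCast_zmod_eq_zero_iff_dvd]
      push_cast
      rw [hcast]
      intro hh
      have h2ne : (2 : ZMod p) ≠ 0 := by
        intro h2'
        have := (ZMod.natCast_eq_zero_iff 2 p).1 (by exact_mod_cast h2')
        have h2p := (Nat.prime_two.eq_one_or_self_of_dvd p this).resolve_left hpp.one_lt.ne'
        omega
      rcases mul_eq_zero.1 (show (2:ZMod p) * r = 0 by linear_combination hh) with h | h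
      · exact h2ne h
      · exact hrne h
    obtain ⟨y, hy⟩ := hensel_all p hpp 0 1 x₀ hx hd k
    exact ⟨y, by push_cast; exact_mod_cast hy⟩

theorem exists_root_omega (N : ℕ) (hN : 0 < N) (h9 : ¬ 9 ∣ N)
    (hp : ∀ p : ℕ, p.Prime → p ∣ N → p % 3 ≠ 2) : ∃ x : ℤ, (N:ℤ) ∣ x^2 + 1*x + 1 := by
  apply solvable_of_prime_pows N hN 1 1
  intro p k hpp hpk
  rcases Nat.eq_zero_or_pos k with hk | hk
  · exact ⟨0, by simp [hk]⟩
  have hpN : p ∣ N := (dvd_pow_self p hk.ne').trans hpk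
  have hmod : p % 3 ≠ 2 := hp p hpp hpN
  rcases eq_or_ne p 3 with h3 | h3
  · have hk1 : k = 1 := by
      by_contra hk1
      have hk2 : 2 ≤ k := by omega
      have hd9 : (9:ℕ) ∣ p ^ k := by
        rw [h3, show (9:ℕ) = 3^2 by norm_num]
        exact pow_dvd_pow 3 hk2
      exact h9 (hd9.trans hpk)
    exact ⟨1, by rw [h3, hk1]; norm_num⟩
  · haveI : Fact p.Prime := ⟨hpp⟩
    have hp3 : p % 3 = 1 := by
      have : ¬ (3 ∣ p) := fun hd =>
        h3 ((Nat.prime_dvd_prime_iff_eq Nat.prime_three hpp).mp hd).symm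
      omega
    have h3card : 3 ∣ Fintype.card (ZMod p)ˣ := by
      rw [ZMod.card_units_eq_totient, Nat.totient_prime hpp]
      have := hpp.two_le
      omega
    haveI : Fact (Nat.Prime 3) := ⟨Nat.prime_three⟩
    obtain ⟨u, hu⟩ := exists_prime_orderOf_dvd_card 3 h3card
    set w : ZMod p := (u : ZMod p) with hw
    have hw3 : w ^ 3 = 1 := by
      have := pow_orderOf_eq_one u
      rw [hu] at this
      have := congrArg (Units.val) this
      push_cast at this
      simpa [hw] using this
    have hwne1 : w ≠ 1 := by
      intro hh
      have : u = 1 := Units.ext (by simpa [hw] using hh)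
      rw [this] at hu
      simp at hu
    have hw0 : w^2 + w + 1 = 0 := by
      have hfac : (w - 1) * (w^2 + w + 1) = 0 := by linear_combination hw3
      rcases mul_eq_zero.1 hfac with h | h
      · exact (hwne1 (sub_eq_zero.mp h)).elim
      · exact h
    have h3ne : (3 : ZMod p) ≠ 0 := by
      intro hh
      have := (ZMod.natCast_eq_zero_iff 3 p).1 (by exact_mod_cast hh)
      exact h3 ((Nat.prime_three.eq_one_or_self_of_dvd p this).resolve_left hpp.one_lt.ne')
    set x₀ : ℤ := (w.val : ℤ) with hx₀
    have hcast : ((x₀ : ℤ) : ZMod p) = w := by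
      rw [hx₀]; push_cast; rw [ZMod.natCast_val, ZMod.cast_id]
    have hx : (p:ℤ) ∣ x₀^2 + 1*x₀ + 1 := by
      rw [← ZMod.intCast_zmod_eq_zero_iff_dvd]
      push_cast
      rw [hcast]
      linear_combination hw0
    have hd : ¬ (p:ℤ) ∣ 2*x₀ + 1 := by
      rw [← ZMod.intCast_zmod_eq_zero_iff_dvd]
      push_cast
      rw [hcast]
      intro hh
      apply h3ne
      have : (2*w + 1)^2 = 0 := by rw [hh]; ring
      linear_combination 4 * hw0 - this
    obtain ⟨y, hy⟩ := hensel_all p hpp 1 1 x₀ hx hd k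
    exact ⟨y, by push_cast; exact_mod_cast hy⟩

theorem build_elliptic (N : ℕ) (hN : 0 < N) (x k s : ℤ) (hs : s = 0 ∨ s = 1)
    (hk : x^2 + s*x + 1 = N * k) :
    ∃ γ : SL(2, ℤ), γ ∈ Gamma0 N ∧ γ ≠ 1 ∧ γ ≠ -1 ∧ ∃ z : UpperHalfPlane, γ • z = z := by
  have hdet : (!![x, -k; (N:ℤ), -(x+s)]).det = 1 := by
    rw [Matrix.det_fin_two_of]
    linear_combination -hk
  set γ : SL(2,ℤ) := ⟨!![x, -k; (N:ℤ), -(x+s)], hdet⟩ with hγ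
  have hent : ∀ i j, (γ : Matrix (Fin 2) (Fin 2) ℤ) i j = !![x, -k; (N:ℤ), -(x+s)] i j := by
    intro i j; rfl
  refine ⟨γ, ?_, ?_, ?_, ?_⟩
  · rw [Gamma0_mem]
    have : (γ : Matrix (Fin 2) (Fin 2) ℤ) 1 0 = (N:ℤ) := by simp [hγ]
    rw [this]
    push_cast
    simp
  · intro h
    have := congrArg (fun g : SL(2,ℤ) => (g : Matrix (Fin 2) (Fin 2) ℤ) 1 0) h
    simp [hγ] at this
    omega
  · intro h
    have := congrArg (fun g : SL(2,ℤ) => (g : Matrix (Fin 2) (Fin 2) ℤ) 1 0) h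
    simp [hγ] at this
    omega
  · set r : ℝ := Real.sqrt (4 - (s:ℝ)^2) with hrr
    have hs4 : (0:ℝ) < 4 - (s:ℝ)^2 := by rcases hs with h|h <;> rw [h] <;> norm_num
    have hrpos : 0 < r := Real.sqrt_pos.mpr hs4
    have hr2 : ((r:ℝ):ℂ)^2 = 4 - (s:ℂ)^2 := by
      rw [← Complex.ofReal_pow, Real.sq_sqrt hs4.le]
      push_cast
      ring
    have hNR : (0:ℝ) < (N:ℝ) := by exact_mod_cast hN
    have hNC : ((N:ℕ):ℂ) ≠ 0 := by exact_mod_cast hNR.ne'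
    set zc : ℂ := ⟨((2*x+s : ℤ):ℝ) / (2*N), r / (2*N)⟩ with hzc
    have hzeq : zc = (((2*x+s : ℤ):ℝ) / (2*N) : ℝ) + ((r / (2*N) : ℝ)) * Complex.I := by
      rw [hzc]; exact Complex.mk_eq_add_mul_I _ _
    refine ⟨⟨zc, ?_⟩, ?_⟩
    · show 0 < zc.im
      have : zc.im = r / (2*N) := rfl
      rw [this]
      positivity
    · rw [smul_eq_iff]
      have e00 : (γ : Matrix (Fin 2) (Fin 2) ℤ) 0 0 = x := by simp [hγ]
      have e01 : (γ : Matrix (Fin 2) (Fin 2) ℤ) 0 1 = -k := by simp [hγ]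
      have e10 : (γ : Matrix (Fin 2) (Fin 2) ℤ) 1 0 = (N:ℤ) := by simp [hγ]
      have e11 : (γ : Matrix (Fin 2) (Fin 2) ℤ) 1 1 = -(x+s) := by simp [hγ]
      rw [e00, e01, e10, e11]
      show ((x:ℤ):ℂ) * zc + ((-k : ℤ):ℂ) = (((N:ℤ):ℂ) * zc + ((-(x+s) : ℤ):ℂ)) * zc
      rw [hzeq]
      have hkC : (x:ℂ)^2 + (s:ℂ)*(x:ℂ) + 1 = (N:ℂ) * (k:ℂ) := by exact_mod_cast hk
      push_cast
      field_simp
      linear_combination 4 * hkC + hr2 - ((r:ℝ):ℂ)^2 * Complex.I_sq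

theorem forward_analysis (N : ℕ) (hN : 0 < N) (γ : SL(2,ℤ)) (hmem : γ ∈ Gamma0 N)
    (h1 : γ ≠ 1) (hm1 : γ ≠ -1) (z : ℍ) (hz : γ • z = z) :
    ∃ t a : ℤ, (t = 0 ∨ t = 1 ∨ t = -1) ∧ (N:ℤ) ∣ a^2 - t*a + 1 := by
  set a := (γ : Matrix (Fin 2) (Fin 2) ℤ) 0 0 with ha
  set b := (γ : Matrix (Fin 2) (Fin 2) ℤ) 0 1 with hb
  set c := (γ : Matrix (Fin 2) (Fin 2) ℤ) 1 0 with hc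
  set d := (γ : Matrix (Fin 2) (Fin 2) ℤ) 1 1 with hd
  have hdet : a * d - b * c = 1 := by
    have := γ.property
    rw [Matrix.det_fin_two] at this
    linarith [this]
  have hcN : (N:ℤ) ∣ c := by
    have := Gamma0_mem.mp hmem
    exact_mod_cast (ZMod.intCast_zmod_eq_zero_iff_dvd c N).mp (by exact_mod_cast this)
  have E := (smul_eq_iff γ z).mp hz
  set Z : ℂ := (z : ℂ) with hZ
  have hquad : (c:ℂ)*Z^2 + ((d:ℂ)-(a:ℂ))*Z - (b:ℂ) = 0 := by linear_combination -E
  set X : ℝ := Z.re with hX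
  set Y : ℝ := Z.im with hY
  have hYpos : 0 < Y := z.im_pos
  rw [show Z = (X:ℂ) + (Y:ℂ)*Complex.I from (Complex.re_add_im Z).symm] at hquad
  have hre := congrArg Complex.re hquad
  have him := congrArg Complex.im hquad
  simp [Complex.add_re, Complex.add_im, Complex.mul_re, Complex.mul_im, pow_two] at hre him
  rcases eq_or_ne c 0 with hc0 | hc0
  · -- c = 0 forces γ = ±1, contradiction
    exfalso
    have hcR : (c:ℝ) = 0 := by exact_mod_cast hc0
    have hda : (d:ℝ) = (a:ℝ) := by
      rcases mul_eq_zero.1 (show ((d:ℝ) - a) * Y = 0 by linear_combination him - Y*X*2*hcR - 0) with h | h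
      · linarith [sub_eq_zero.mp h]
      · exact absurd h hYpos.ne'
    have hda' : d = a := by exact_mod_cast hda
    have hb0 : (b:ℝ) = 0 := by linear_combination -hre + (X*X - Y*Y)*hcR + X*hda
    have hb0' : b = 0 := by exact_mod_cast hb0
    have haa : a * a = 1 := by rw [hda', hb0'] at hdet; linarith
    rcases mul_self_eq_one_iff.mp haa with ha1 | ha1
    · apply h1
      apply Matrix.SpecialLinearGroup.ext
      intro i j
      fin_cases i <;> fin_cases j <;>
        simp [Matrix.SpecialLinearGroup.coe_one, ← ha, ← hb, ← hc, ← hd, ha1, hb0', hc0, hda'] <;>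
        simp [Matrix.one_fin_two, ← ha, ← hb, ← hc, ← hd, ha1, hb0', hc0, hda']
    · apply hm1
      apply Matrix.SpecialLinearGroup.ext
      intro i j
      fin_cases i <;> fin_cases j <;>
        simp [← ha, ← hb, ← hc, ← hd, ha1, hb0', hc0, hda'] <;>
        simp [Matrix.one_fin_two, ← ha, ← hb, ← hc, ← hd, ha1, hb0', hc0, hda']
  · have hcR : (c:ℝ) ≠ 0 := by exact_mod_cast hc0
    have him' : 2*(c:ℝ)*X + ((d:ℝ) - a) = 0 := by
      rcases mul_eq_zero.1 (show (2*(c:ℝ)*X + ((d:ℝ) - a)) * Y = 0 by linear_combination him) with h | h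
      · exact h
      · exact absurd h hYpos.ne'
    have had' : (d:ℝ) = a - 2*c*X := by linear_combination him'
    have hb' : (b:ℝ) = -(c:ℝ)*X^2 - c*Y^2 := by linear_combination -hre + X*him'
    have key : ((a:ℝ)-d)^2 + 4*b*c = -(2*c*Y)^2 := by rw [had', hb']; ring
    have hne : (2*(c:ℝ)*Y) ≠ 0 := by
      intro h
      rcases mul_eq_zero.1 h with h | h
      · rcases mul_eq_zero.1 h with h | h
        · norm_num at h
        · exact hcR h
      · exact hYpos.ne' h
    have hlt : ((a:ℝ)-d)^2 + 4*b*c < 0 := by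
      rw [key]
      have h0 : 0 < (2*(c:ℝ)*Y)^2 := (sq_nonneg _).lt_of_ne (Ne.symm (pow_ne_zero 2 hne))
      linarith
    have hltZ : (a-d)^2 + 4*b*c < 0 := by exact_mod_cast hlt
    have hsq : (a+d)^2 = (a-d)^2 + 4*b*c + 4 := by linear_combination 4*hdet
    have hlt4 : (a+d)^2 < 4 := by omega
    have hbd : -2 < a + d ∧ a + d < 2 := by
      constructor <;> nlinarith [sq_nonneg (a+d)]
    refine ⟨a+d, a, by omega, ?_⟩
    have hdvd : (N:ℤ) ∣ b * c := Dvd.dvd.mul_left hcN b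
    rw [show a^2 - (a+d)*a + 1 = -(b*c) by linear_combination -hdet]
    exact dvd_neg.mpr hdvd


theorem contradictB (N : ℕ) (y : ℤ) (h : (N:ℤ) ∣ y^2 + y + 1)
    (hB : 9 ∣ N ∨ ∃ p : ℕ, p.Prime ∧ p ∣ N ∧ p % 3 = 2) : False := by
  rcases hB with h9 | ⟨p, hp, hpN, hp3⟩
  · have h9' : ((9:ℕ):ℤ) ∣ y^2 + y + 1 := dvd_trans (Int.natCast_dvd_natCast.mpr h9) h
    have hz9 : ((y : ZMod 9))^2 + (y : ZMod 9) + 1 = 0 := by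
      have := (ZMod.intCast_zmod_eq_zero_iff_dvd (y^2+y+1) 9).mpr (by exact_mod_cast h9')
      push_cast at this
      exact this
    have all : ∀ v : ZMod 9, v^2 + v + 1 ≠ 0 := by decide
    exact all _ hz9
  · exact no_root_mod3 p hp hp3 y (dvd_trans (Int.natCast_dvd_natCast.mpr hpN) h)

/-- `Γ0(N)` has an elliptic point (a point of `ℍ` fixed by some element of `Γ0(N)`
other than `±I`) if and only if it is not the case that both: (i) `4 ∣ N` or some
prime `p ≡ 3 (mod 4)` divides `N`, and (ii) `9 ∣ N` or some prime `p ≡ 2 (mod 3)`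
divides `N`. -/
theorem gamma0_has_elliptic_point_iff (N : ℕ) (hN : 0 < N) :
    (∃ γ : SL(2, ℤ), γ ∈ Gamma0 N ∧ γ ≠ 1 ∧ γ ≠ -1 ∧ ∃ z : UpperHalfPlane, γ • z = z) ↔
    ¬ ((4 ∣ N ∨ ∃ p : ℕ, p.Prime ∧ p ∣ N ∧ p % 4 = 3) ∧
       (9 ∣ N ∨ ∃ p : ℕ, p.Prime ∧ p ∣ N ∧ p % 3 = 2)) := by
  constructor
  · rintro ⟨γ, hmem, h1, hm1, z, hz⟩ ⟨hA, hB⟩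
    obtain ⟨t, a, ht, hdvd⟩ := forward_analysis N hN γ hmem h1 hm1 z hz
    rcases ht with rfl | rfl | rfl
    · -- trace 0 : N ∣ a² + 1
      have hdvd' : (N:ℤ) ∣ a^2 + 1 := by
        have : a^2 - 0*a + 1 = a^2 + 1 := by ring
        rwa [this] at hdvd
      rcases hA with h4 | ⟨p, hp, hpN, hp4⟩
      · have h4' : ((4:ℕ):ℤ) ∣ a^2 + 1 := dvd_trans (Int.natCast_dvd_natCast.mpr h4) hdvd'
        have hz4 : ((a : ZMod 4))^2 + 1 = 0 := by
          have := (ZMod.intCast_zmod_eq_zero_iff_dvd (a^2+1) 4).mpr (by exact_mod_cast h4')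
          push_cast at this
          exact this
        have all : ∀ v : ZMod 4, v^2 + 1 ≠ 0 := by decide
        exact all _ hz4
      · haveI : Fact p.Prime := ⟨hp⟩
        have hpd : ((p:ℕ):ℤ) ∣ a^2 + 1 := dvd_trans (Int.natCast_dvd_natCast.mpr hpN) hdvd'
        have hz : ((a : ZMod p))^2 + 1 = 0 := by
          have := (ZMod.intCast_zmod_eq_zero_iff_dvd (a^2+1) p).mpr (by exact_mod_cast hpd)
          push_cast at this
          exact this
        have hsq : IsSquare (-1 : ZMod p) := ⟨(a : ZMod p), by linear_combination -hz⟩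
        exact (ZMod.exists_sq_eq_neg_one_iff.mp hsq) hp4
    · -- trace 1 : N ∣ a² - a + 1
      refine contradictB N (-a) ?_ hB
      have : (-a)^2 + (-a) + 1 = a^2 - 1*a + 1 := by ring
      rwa [this]
    · -- trace -1 : N ∣ a² + a + 1
      refine contradictB N a ?_ hB
      have : a^2 + a + 1 = a^2 - (-1)*a + 1 := by ring
      rwa [this]
  · intro h
    rw [not_and_or] at h
    rcases h with h | h
    · push_neg at h
      obtain ⟨h4, hp⟩ := h
      obtain ⟨x, k, hk⟩ := exists_root_neg_one N hN h4
        (fun p hp1 hp2 => by have := hp p; tauto)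
      exact build_elliptic N hN x k 0 (Or.inl rfl) (by linear_combination hk)
    · push_neg at h
      obtain ⟨h9, hp⟩ := h
      obtain ⟨x, k, hk⟩ := exists_root_omega N hN h9
        (fun p hp1 hp2 => by have := hp p; tauto)
      exact build_elliptic N hN x k 1 (Or.inr rfl) (by linear_combination hk)
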